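/- Let s be a word with r hp-runs and length ℓ. Define s_0 = s and s_{n+1} = (s_n \overline{s_n})^3, where \overline{s_n} is s_n rewritten over a disjoint copy of its alphabet. Then |s_n| = 6^n ℓ and the number of hp-runs in s_n is 6^n r + (6^n - 1)/5, so the hp-run density of s_n tends to r/ℓ + 1/(5ℓ) as n → ∞. -/

import Mathlib

def HasPeriodOnL {A : Type*} (v : List A) (i j p : ℕ) : Prop :=
  ∀ k, i ≤ k → k + p ≤ j → v[k]? = v[k + p]?

def IsRunWithL {A : Type*} (v : List A) (i j p : ℕ) : Prop :=
  i ≤ j ∧ j < v.length ∧ 1 ≤ p ∧ HasPeriodOnL v i j p ∧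
    (∀ q, 1 ≤ q → q < p → ¬ HasPeriodOnL v i j q) ∧
    2 * p ≤ j - i + 1 ∧
    (i = 0 ∨ v[i - 1]? ≠ v[i - 1 + p]?) ∧
    (j + 1 = v.length ∨ v[j + 1 - p]? ≠ v[j + 1]?)

def IsHPRunL {A : Type*} (v : List A) (i j : ℕ) : Prop :=
  ∃ p, IsRunWithL v i j p ∧ 3 * p ≤ j - i + 1

/-- The number of highly periodic runs in the word `v`. -/
noncomputable def hpRunCount {A : Type*} (v : List A) : ℕ :=
  {q : ℕ × ℕ | IsHPRunL v q.1 q.2}.ncard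

/-- The copy `\overline{w}` of `w` over a disjoint alphabet copy, at stage `n`
(second coordinates of letters of stage-`n` words lie in `[0, 2^n)`, so
shifting them by `2^n` yields an injective relettering into a disjoint
alphabet). -/
def barCopy {A : Type*} (n : ℕ) (w : List (A × ℕ)) : List (A × ℕ) :=
  w.map fun a => (a.1, a.2 + 2 ^ n)

/-- The sequence `s₀ = s`, `s_{n+1} = (s_n \overline{s_n})^3`. -/
def seqWord {A : Type*} (s : List A) : ℕ → List (A × ℕ)
  | 0 => s.map fun a => (a, 0)
  | n + 1 =>
      (seqWord s n ++ barCopy n (seqWord s n)) ++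
      (seqWord s n ++ barCopy n (seqWord s n)) ++
      (seqWord s n ++ barCopy n (seqWord s n))

section Aux
variable {A : Type*} {B : Type*}

lemma hasPeriodOnL_map_iff {f : A → B} (hf : Function.Injective f) (v : List A) (i j p : ℕ) :
    HasPeriodOnL (v.map f) i j p ↔ HasPeriodOnL v i j p := by
  constructor
  · intro h k hik hkj
    have := h k hik hkj
    rw [List.getElem?_map, List.getElem?_map] at this
    exact Option.map_injective hf this
  · intro h k hik hkj
    rw [List.getElem?_map, List.getElem?_map, h k hik hkj]

lemma isHPRunL_map_iff {f : A → B} (hf : Function.Injective f) (v : List A) (i j : ℕ) :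
    IsHPRunL (v.map f) i j ↔ IsHPRunL v i j := by
  have hne : ∀ a b : ℕ, ((v.map f)[a]? = (v.map f)[b]?) ↔ (v[a]? = v[b]?) := by
    intro a b
    rw [List.getElem?_map, List.getElem?_map]
    exact ⟨fun h => Option.map_injective hf h, fun h => by rw [h]⟩
  unfold IsHPRunL IsRunWithL
  simp only [List.length_map, hasPeriodOnL_map_iff hf, ne_eq, hne]

lemma hpRunCount_map {f : A → B} (hf : Function.Injective f) (v : List A) :
    hpRunCount (v.map f) = hpRunCount v := by
  unfold hpRunCount
  congr 1
  ext q
  simp only [Set.mem_setOf_eq]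
  exact isHPRunL_map_iff hf v q.1 q.2

lemma hp_bounds {v : List A} {i j : ℕ} (h : IsHPRunL v i j) : i ≤ j ∧ j < v.length := by
  obtain ⟨p, ⟨h1, h2, _⟩, _⟩ := h
  exact ⟨h1, h2⟩

lemma hpSet_finite (v : List A) : {q : ℕ × ℕ | IsHPRunL v q.1 q.2}.Finite := by
  apply Set.Finite.subset ((Set.finite_Iio v.length).prod (Set.finite_Iio v.length))
  rintro ⟨i, j⟩ hq
  obtain ⟨h1, h2⟩ := hp_bounds hq
  exact ⟨lt_of_le_of_lt h1 h2, h2⟩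

end Aux

def trip {A : Type*} (n : ℕ) (w : List (A × ℕ)) : List (A × ℕ) :=
  (w ++ barCopy n w) ++ (w ++ barCopy n w) ++ (w ++ barCopy n w)

lemma seqWord_succ {A : Type*} (s : List A) (n : ℕ) :
    seqWord s (n + 1) = trip n (seqWord s n) := rfl

section Trip
variable {A : Type*} (n : ℕ) (w : List (A × ℕ))

lemma barCopy_length : (barCopy n w).length = w.length := List.length_map _

lemma trip_length : (trip n w).length = 6 * w.length := by
  simp [trip, barCopy]; ring

lemma trip_getElem_block {m r : ℕ} (hm : m < 6) (hr : r < w.length) :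
    (trip n w)[m * w.length + r]? =
      (w[r]?).map (fun a => (a.1, a.2 + (m % 2) * 2 ^ n)) := by
  set L := w.length with hLdef
  have hbar : (barCopy n w).length = L := barCopy_length n w
  have hu : (w ++ barCopy n w).length = 2 * L := by simp [hbar]; ring
  have hu0 : ∀ r' < L, (w ++ barCopy n w)[r']? = w[r']? := by
    intro r' hr'
    exact List.getElem?_append_left hr'
  have hu1 : ∀ r' < L, (w ++ barCopy n w)[L + r']? =
      (w[r']?).map (fun a => (a.1, a.2 + 2 ^ n)) := by
    intro r' hr'
    rw [List.getElem?_append_right (by omega)]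
    simp [barCopy, List.getElem?_map, L]
  have huu : ((w ++ barCopy n w) ++ (w ++ barCopy n w)).length = 4 * L := by
    simp [hbar]; omega
  have ht0 : ∀ t < 2 * L, (trip n w)[t]? = (w ++ barCopy n w)[t]? := by
    intro t ht
    unfold trip
    rw [List.getElem?_append_left (by omega), List.getElem?_append_left (by omega)]
  have ht2 : ∀ t < 2 * L, (trip n w)[2 * L + t]? = (w ++ barCopy n w)[t]? := by
    intro t ht
    unfold trip
    rw [List.getElem?_append_left (by omega), List.getElem?_append_right (by omega)]
    congr 1
    omega
  have ht4 : ∀ t < 2 * L, (trip n w)[4 * L + t]? = (w ++ barCopy n w)[t]? := by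
    intro t ht
    unfold trip
    rw [List.getElem?_append_right (by omega)]
    congr 1
    omega
  interval_cases m
  · rw [show 0 * L + r = r by omega, ht0 r (by omega), hu0 r hr]
    simp
  · rw [show 1 * L + r = L + r by omega, ht0 (L + r) (by omega), hu1 r hr]
    simp
  · rw [show 2 * L + r = 2 * L + r by omega, ht2 r (by omega), hu0 r hr]
    simp
  · rw [show 3 * L + r = 2 * L + (L + r) by omega, ht2 (L + r) (by omega), hu1 r hr]
    simp
  · rw [show 4 * L + r = 4 * L + r by omega, ht4 r (by omega), hu0 r hr]
    simp
  · rw [show 5 * L + r = 4 * L + (L + r) by omega, ht4 (L + r) (by omega), hu1 r hr]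
    simp

lemma trip_getElem (hL : 0 < w.length) {t : ℕ} (ht : t < 6 * w.length) :
    (trip n w)[t]? =
      (w[t % w.length]?).map (fun a => (a.1, a.2 + (t / w.length % 2) * 2 ^ n)) := by
  have hq : t / w.length < 6 := Nat.div_lt_of_lt_mul (by omega)
  have h := trip_getElem_block n w (m := t / w.length) (r := t % w.length) hq
    (Nat.mod_lt _ hL)
  rw [show t / w.length * w.length + t % w.length = t from Nat.div_add_mod' t w.length] at h
  exact h

end Trip

lemma div_pred_eq {L t : ℕ} (hL : 0 < L) (h : ¬ L ∣ t) : (t - 1) / L = t / L := by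
  have hmod := Nat.div_add_mod t L
  have hr : t % L ≠ 0 := fun h0 => h (Nat.dvd_of_mod_eq_zero h0)
  have hlt : t % L < L := Nat.mod_lt t hL
  have h1 : t - 1 = L * (t / L) + (t % L - 1) := by omega
  have h2 : (t % L - 1) / L = 0 := Nat.div_eq_of_lt (by omega)
  rw [h1, Nat.mul_add_div hL, h2, Nat.add_zero]

lemma div_pred_mult {L t : ℕ} (hL : 0 < L) (ht : 0 < t) (h : L ∣ t) :
    (t - 1) / L + 1 = t / L := by
  obtain ⟨q, rfl⟩ := h
  have hq : q ≠ 0 := by rintro rfl; simp at ht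
  obtain ⟨q', rfl⟩ : ∃ q', q = q' + 1 := ⟨q - 1, by omega⟩
  have h1 : L * (q' + 1) - 1 = L * q' + (L - 1) := by
    have : L * (q' + 1) = L * q' + L := by ring
    omega
  have h2 : (L - 1) / L = 0 := Nat.div_eq_of_lt (by omega)
  rw [h1, Nat.mul_add_div hL, h2, Nat.add_zero, Nat.mul_div_cancel_left _ hL]

lemma chg_of_parity {L t : ℕ} (hL : 0 < L) (h : (t - 1) / L % 2 ≠ t / L % 2) : L ∣ t := by
  by_contra hd
  rw [div_pred_eq hL hd] at h
  exact h rfl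

lemma parity_of_chg {L t : ℕ} (hL : 0 < L) (ht : 0 < t) (h : L ∣ t) :
    (t - 1) / L % 2 ≠ t / L % 2 := by
  have := div_pred_mult hL ht h
  omega
section Cross
variable {A : Type*} {n : ℕ} {w : List (A × ℕ)}

lemma parity_of_eq (hc : ∀ a ∈ w, a.2 < 2 ^ n) (hL : 0 < w.length) {t1 t2 : ℕ}
    (h1 : t1 < 6 * w.length) (h2 : t2 < 6 * w.length)
    (heq : (trip n w)[t1]? = (trip n w)[t2]?) :
    t1 / w.length % 2 = t2 / w.length % 2 := by
  rw [trip_getElem n w hL h1, trip_getElem n w hL h2] at heq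
  obtain ⟨a1, ha1⟩ : ∃ a, w[t1 % w.length]? = some a :=
    ⟨w[t1 % w.length]'(Nat.mod_lt _ hL), List.getElem?_eq_some_iff.mpr ⟨Nat.mod_lt _ hL, rfl⟩⟩
  obtain ⟨a2, ha2⟩ : ∃ a, w[t2 % w.length]? = some a :=
    ⟨w[t2 % w.length]'(Nat.mod_lt _ hL), List.getElem?_eq_some_iff.mpr ⟨Nat.mod_lt _ hL, rfl⟩⟩
  rw [ha1, ha2] at heq
  simp only [Option.map_some, Option.some.injEq, Prod.mk.injEq] at heq
  have b1 : a1.2 < 2 ^ n := hc a1 (List.mem_of_getElem? ha1)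
  have b2 : a2.2 < 2 ^ n := hc a2 (List.mem_of_getElem? ha2)
  have e2 : a1.2 + (t1 / w.length % 2) * 2 ^ n = a2.2 + (t2 / w.length % 2) * 2 ^ n := heq.2
  have m1 : t1 / w.length % 2 < 2 := Nat.mod_lt _ (by omega)
  have m2 : t2 / w.length % 2 < 2 := Nat.mod_lt _ (by omega)
  set P1 := t1 / w.length % 2
  set P2 := t2 / w.length % 2
  interval_cases P1 <;> interval_cases P2 <;> omega

lemma cross_dvd (hc : ∀ a ∈ w, a.2 < 2 ^ n) (hL : 0 < w.length) {i j p b : ℕ}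
    (hj : j < 6 * w.length) (hper : HasPeriodOnL (trip n w) i j p) (hp : 1 ≤ p)
    (hlen : 3 * p ≤ j - i + 1) (hb : w.length ∣ b) (hib : i < b) (hbj : b ≤ j) :
    2 * w.length ∣ p := by
  set L := w.length with hLdef
  have Ppar : ∀ k, i ≤ k → k + p ≤ j → k / L % 2 = (k + p) / L % 2 := fun k hk hkp =>
    parity_of_eq hc hL (by omega) (by omega) (hper k hk hkp)
  have hLp : L ∣ p := by
    by_cases hpl : L ≤ p
    · set t := (i / L + 1) * L with htdef
      have htq : t = L * (i / L) + L := by rw [htdef]; ring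
      have hdm := Nat.div_add_mod i L
      have hml : i % L < L := Nat.mod_lt i hL
      have ht1 : i < t := by omega
      have ht2 : t ≤ i + L := by omega
      have hLt : L ∣ t := ⟨i / L + 1, by rw [htdef]; ring⟩
      have e1 := Ppar (t - 1) (by omega) (by omega)
      have e2 := Ppar t (by omega) (by omega)
      have hne := parity_of_chg (t := t) hL (by omega) hLt
      have hne' : (t + p - 1) / L % 2 ≠ (t + p) / L % 2 := by
        rw [show t + p - 1 = (t - 1) + p by omega] at *
        omega
      have := chg_of_parity hL hne'
      have := Nat.dvd_sub this hLt
      rwa [show t + p - t = p by omega] at this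
    · by_cases hbj2 : b + p ≤ j
      · have e1 := Ppar (b - 1) (by omega) (by omega)
        have e2 := Ppar b (by omega) (by omega)
        have hne := parity_of_chg (t := b) hL (by omega) hb
        have hne' : (b + p - 1) / L % 2 ≠ (b + p) / L % 2 := by
          rw [show b + p - 1 = (b - 1) + p by omega] at *
          omega
        have hd := chg_of_parity hL hne'
        have := Nat.dvd_sub hd hb
        rwa [show b + p - b = p by omega] at this
      · have hbig : i + 2 * p ≤ b := by omega
        have e1 := Ppar (b - p - 1) (by omega) (by omega)
        have e2 := Ppar (b - p) (by omega) (by omega)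
        rw [show b - p - 1 + p = b - 1 by omega] at e1
        rw [show b - p + p = b by omega] at e2
        have hne := parity_of_chg (t := b) hL (by omega) hb
        have hne' : (b - p - 1) / L % 2 ≠ (b - p) / L % 2 := by omega
        have hd := chg_of_parity hL hne'
        have := Nat.dvd_sub hb hd
        rwa [show b - (b - p) = p by omega] at this
  obtain ⟨q, rfl⟩ := hLp
  have hq : q ≠ 0 := by rintro rfl; simp at hp
  have hip := Ppar i le_rfl (by omega)
  have hdiv : (i + L * q) / L = i / L + q := by
    rw [Nat.add_mul_div_left _ _ hL]
  rw [hdiv] at hip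
  obtain ⟨q', rfl⟩ : ∃ q', q = 2 * q' := ⟨q / 2, by omega⟩
  exact ⟨q', by ring⟩

end Cross
section Block
variable {A : Type*} {n : ℕ} {w : List (A × ℕ)}

lemma add_div_block {L m r : ℕ} (hL : 0 < L) (hr : r < L) : (m * L + r) / L = m := by
  rw [mul_comm, Nat.mul_add_div hL, Nat.div_eq_of_lt hr, Nat.add_zero]

lemma pred_div_block {L m : ℕ} (hL : 0 < L) (hm : 0 < m) : (m * L - 1) / L = m - 1 := by
  have h1 : (m * L - 1) / L + 1 = (m * L) / L :=
    div_pred_mult hL (by positivity) ⟨m, mul_comm _ _⟩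
  have h2 : m * L / L = m := Nat.mul_div_cancel _ hL
  omega

lemma shift_injective (m n : ℕ) :
    Function.Injective (fun a : A × ℕ => (a.1, a.2 + m % 2 * 2 ^ n)) := by
  intro a b h
  simp only [Prod.mk.injEq] at h
  exact Prod.ext h.1 (by omega)

lemma block_eq_iff (hL : 0 < w.length) {m r1 r2 : ℕ} (hm : m < 6)
    (h1 : r1 < w.length) (h2 : r2 < w.length) :
    (trip n w)[m * w.length + r1]? = (trip n w)[m * w.length + r2]? ↔ w[r1]? = w[r2]? := by
  rw [trip_getElem_block n w hm h1, trip_getElem_block n w hm h2]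
  exact ⟨fun h => Option.map_injective (shift_injective m n) h, fun h => by rw [h]⟩

lemma block_period_iff (hL : 0 < w.length) {m i' j' q : ℕ} (hm : m < 6) (hj' : j' < w.length) :
    HasPeriodOnL (trip n w) (m * w.length + i') (m * w.length + j') q ↔
      HasPeriodOnL w i' j' q := by
  constructor
  · intro h k hk hkq
    have := h (m * w.length + k) (by omega) (by omega)
    rw [show m * w.length + k + q = m * w.length + (k + q) by omega] at this
    rw [trip_getElem_block n w hm (by omega), trip_getElem_block n w hm (by omega)] at this
    exact Option.map_injective (shift_injective m n) this
  · intro h k hk hkq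
    have hk' : m * w.length ≤ k := by omega
    obtain ⟨k', rfl⟩ : ∃ k', k = m * w.length + k' := ⟨k - m * w.length, by omega⟩
    rw [show m * w.length + k' + q = m * w.length + (k' + q) by omega]
    rw [trip_getElem_block n w hm (by omega), trip_getElem_block n w hm (by omega),
      h k' (by omega) (by omega)]

lemma block_hp_iff (hc : ∀ a ∈ w, a.2 < 2 ^ n) (hL : 0 < w.length) {m i' j' : ℕ}
    (hm : m < 6) (hj' : j' < w.length) :
    IsHPRunL (trip n w) (m * w.length + i') (m * w.length + j') ↔ IsHPRunL w i' j' := by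
  have hmul : m * w.length ≤ 5 * w.length := Nat.mul_le_mul_right w.length (by omega)
  constructor
  · rintro ⟨p, ⟨h1, h2, h3, h4, h5, h6, h7, h8⟩, h9⟩
    have hij : i' ≤ j' := by omega
    have hple : p ≤ j' - i' := by omega
    refine ⟨p, ⟨hij, hj', h3, (block_period_iff hL hm hj').1 h4,
      fun q hq1 hq2 hq' => h5 q hq1 hq2 ((block_period_iff hL hm hj').2 hq'),
      by omega, ?_, ?_⟩, by omega⟩
    · rcases Nat.eq_zero_or_pos i' with hi0 | hi0
      · exact Or.inl hi0
      · rcases h7 with h7 | h7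
        · exact absurd h7 (by omega)
        · refine Or.inr ?_
          rw [show m * w.length + i' - 1 + p = m * w.length + (i' - 1 + p) by omega,
            show m * w.length + i' - 1 = m * w.length + (i' - 1) by omega] at h7
          intro hw
          exact h7 ((block_eq_iff hL hm (by omega) (by omega)).2 hw)
    · rcases Nat.lt_or_ge (j' + 1) w.length with hjl | hjl
      · rcases h8 with h8 | h8
        · rw [trip_length] at h8; omega
        · refine Or.inr ?_
          rw [show m * w.length + j' + 1 - p = m * w.length + (j' + 1 - p) by omega,
            show m * w.length + j' + 1 = m * w.length + (j' + 1) by omega] at h8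
          intro hw
          exact h8 ((block_eq_iff hL hm (by omega) (by omega)).2 hw)
      · exact Or.inl (by omega)
  · rintro ⟨p, ⟨h1, h2, h3, h4, h5, h6, h7, h8⟩, h9⟩
    have hple : p ≤ j' - i' := by omega
    refine ⟨p, ⟨by omega, by rw [trip_length]; omega, h3, (block_period_iff hL hm hj').2 h4,
      fun q hq1 hq2 hq' => h5 q hq1 hq2 ((block_period_iff hL hm hj').1 hq'),
      by omega, ?_, ?_⟩, by omega⟩
    · rcases Nat.eq_zero_or_pos (m * w.length + i') with h0 | h0
      · exact Or.inl h0
      · refine Or.inr ?_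
        rcases Nat.eq_zero_or_pos i' with hi0 | hi0
        · subst hi0
          have hm0 : m ≠ 0 := by rintro rfl; simp at h0
          intro heq
          have hpar := parity_of_eq hc hL
            (t1 := m * w.length + 0 - 1) (t2 := m * w.length + 0 - 1 + p)
            (by omega) (by omega) heq
          rw [show m * w.length + 0 - 1 + p = m * w.length + (p - 1) by omega,
            show m * w.length + 0 - 1 = m * w.length - 1 by omega] at hpar
          rw [pred_div_block hL (by omega), add_div_block hL (by omega)] at hpar
          omega
        · rcases h7 with h7 | h7
          · omega
          · rw [show m * w.length + i' - 1 + p = m * w.length + (i' - 1 + p) by omega,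
              show m * w.length + i' - 1 = m * w.length + (i' - 1) by omega]
            intro hw
            exact h7 ((block_eq_iff hL hm (by omega) (by omega)).1 hw)
    · rcases Nat.lt_or_ge (j' + 1) w.length with hjl | hjl
      · rcases h8 with h8 | h8
        · omega
        · refine Or.inr ?_
          rw [show m * w.length + j' + 1 - p = m * w.length + (j' + 1 - p) by omega,
            show m * w.length + j' + 1 = m * w.length + (j' + 1) by omega]
          intro hw
          exact h8 ((block_eq_iff hL hm (by omega) (by omega)).1 hw)
      · have hjL : j' + 1 = w.length := by omega
        rcases Nat.lt_or_ge m 5 with hm5 | hm5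
        · refine Or.inr ?_
          intro heq
          have h5L : (m + 1) * w.length ≤ 5 * w.length :=
            Nat.mul_le_mul_right w.length (by omega)
          have hexp : (m + 1) * w.length = m * w.length + w.length := by ring
          have hpar := parity_of_eq hc hL
            (t1 := m * w.length + j' + 1 - p) (t2 := m * w.length + j' + 1)
            (by omega) (by omega) heq
          rw [show m * w.length + j' + 1 - p = m * w.length + (w.length - p) by omega] at hpar
          rw [show m * w.length + j' + 1 = (m + 1) * w.length + 0 by omega] at hpar
          rw [add_div_block hL (by omega), add_div_block hL hL] at hpar
          omega
        · have hm5' : m = 5 := by omega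
          subst hm5'
          exact Or.inl (by rw [trip_length]; omega)
end Block
section Char
variable {A : Type*} {n : ℕ} {w : List (A × ℕ)}

lemma full_run (hc : ∀ a ∈ w, a.2 < 2 ^ n) (hL : 0 < w.length) :
    IsHPRunL (trip n w) 0 (6 * w.length - 1) := by
  refine ⟨2 * w.length, ⟨by omega, by rw [trip_length]; omega, by omega, ?_, ?_,
    by omega, Or.inl rfl, Or.inl (by rw [trip_length]; omega)⟩, by omega⟩
  · intro k hk hkp
    have hk6 : k < 6 * w.length := by omega
    have hk6' : k + 2 * w.length < 6 * w.length := by omega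
    rw [trip_getElem n w hL hk6, trip_getElem n w hL hk6']
    have e1 : (k + 2 * w.length) % w.length = k % w.length := by
      rw [show k + 2 * w.length = k + w.length * 2 by ring, Nat.add_mul_mod_self_left]
    have e2 : (k + 2 * w.length) / w.length % 2 = k / w.length % 2 := by
      rw [show k + 2 * w.length = k + w.length * 2 by ring, Nat.add_mul_div_left _ _ hL]
      omega
    rw [e1, e2]
  · intro q hq1 hq2 hq
    have hd := cross_dvd hc hL (i := 0) (j := 6 * w.length - 1) (b := w.length)
      (by omega) hq hq1 (by omega) ⟨1, (mul_one _).symm⟩ (by omega) (by omega)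
    have := Nat.le_of_dvd (by omega) hd
    omega

lemma hp_char (hc : ∀ a ∈ w, a.2 < 2 ^ n) (hL : 0 < w.length) (i j : ℕ) :
    IsHPRunL (trip n w) i j ↔
      (∃ m < 6, ∃ i' j', j' < w.length ∧ IsHPRunL w i' j' ∧
        i = m * w.length + i' ∧ j = m * w.length + j') ∨
      (i = 0 ∧ j = 6 * w.length - 1) := by
  constructor
  · intro h
    have hb := hp_bounds h
    have hj6 : j < 6 * w.length := by have := hb.2; rwa [trip_length] at this
    by_cases hcross : ∃ b, w.length ∣ b ∧ i < b ∧ b ≤ j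
    · right
      obtain ⟨b, hb1, hb2, hb3⟩ := hcross
      obtain ⟨p, ⟨h1, h2, h3, h4, h5, h6, h7, h8⟩, h9⟩ := h
      have hd := cross_dvd hc hL hj6 h4 h3 h9 hb1 hb2 hb3
      have hge := Nat.le_of_dvd (by omega) hd
      omega
    · left
      push_neg at hcross
      have hdm := Nat.div_add_mod i w.length
      have hml : i % w.length < w.length := Nat.mod_lt i hL
      have hiblock : i < (i / w.length + 1) * w.length := by
        have : (i / w.length + 1) * w.length = w.length * (i / w.length) + w.length := by ring
        omega
      have hjblock : j < (i / w.length + 1) * w.length := by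
        by_contra hcon
        exact absurd (hcross ((i / w.length + 1) * w.length)
          ⟨i / w.length + 1, mul_comm _ _⟩ hiblock) (by omega)
      have hexp : (i / w.length + 1) * w.length = w.length * (i / w.length) + w.length := by
        ring
      have hm6 : i / w.length < 6 := by
        rcases Nat.lt_or_ge (i / w.length) 6 with h' | h'
        · exact h'
        · exfalso
          have : 6 * w.length ≤ w.length * (i / w.length) :=
            le_trans (by omega) (Nat.mul_le_mul_left w.length h')
          omega
      have hcomm : i / w.length * w.length = w.length * (i / w.length) := mul_comm _ _
      have htl := trip_length n w
      refine ⟨i / w.length, hm6, i - i / w.length * w.length, j - i / w.length * w.length,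
        by omega, ?_, by omega, by omega⟩
      have := (block_hp_iff (i' := i - i / w.length * w.length)
        (j' := j - i / w.length * w.length) hc hL hm6 (by omega)).1
      apply this
      rw [show i / w.length * w.length + (i - i / w.length * w.length) = i by omega,
        show i / w.length * w.length + (j - i / w.length * w.length) = j by omega]
      exact h
  · rintro (⟨m, hm, i', j', hj', hrun, rfl, rfl⟩ | ⟨rfl, rfl⟩)
    · exact (block_hp_iff hc hL hm hj').2 hrun
    · exact full_run hc hL

end Char
section Count
variable {A : Type*} {n : ℕ} {w : List (A × ℕ)}

lemma trip_count (hc : ∀ a ∈ w, a.2 < 2 ^ n) (hL : 0 < w.length) :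
    hpRunCount (trip n w) = 6 * hpRunCount w + 1 := by
  classical
  set S : Set (ℕ × ℕ) := {q | IsHPRunL w q.1 q.2} with hS
  have hSfin : S.Finite := hpSet_finite w
  have hSsub : ∀ q ∈ S, q.1 < w.length ∧ q.2 < w.length := by
    rintro ⟨i, j⟩ hq
    obtain ⟨h1, h2⟩ := hp_bounds hq
    exact ⟨by omega, h2⟩
  set g : ℕ → ℕ × ℕ → ℕ × ℕ := fun m q => (m * w.length + q.1, m * w.length + q.2) with hg
  have hginj : ∀ m, Function.Injective (g m) := by
    intro m a b h
    simp only [hg, Prod.mk.injEq] at h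
    exact Prod.ext (by omega) (by omega)
  set T : ℕ → Set (ℕ × ℕ) := fun m => g m '' S with hT
  have hTfin : ∀ m, (T m).Finite := fun m => hSfin.image _
  have hTcard : ∀ m, (T m).ncard = S.ncard := fun m =>
    Set.ncard_image_of_injective S (hginj m)
  have hTmem : ∀ m q, q ∈ T m → m * w.length ≤ q.1 ∧ q.1 < m * w.length + w.length ∧
      m * w.length ≤ q.2 ∧ q.2 < m * w.length + w.length := by
    rintro m q ⟨a, ha, rfl⟩
    obtain ⟨h1, h2⟩ := hSsub a ha
    simp only [hg]
    omega
  have hmono : ∀ m m' : ℕ, m < m' → ∀ q, q ∈ T m → q ∉ T m' := by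
    intro m m' hmm q hq hq'
    have h1 := hTmem m q hq
    have h2 := hTmem m' q hq'
    have : (m + 1) * w.length ≤ m' * w.length := Nat.mul_le_mul_right w.length (by omega)
    have hexp : (m + 1) * w.length = m * w.length + w.length := by ring
    omega
  have hpt : ∀ m, m < 6 → (0, 6 * w.length - 1) ∉ T m := by
    intro m hm hmem
    have h1 := hTmem m _ hmem
    simp only at h1
    have hle : (m + 1) * w.length ≤ 6 * w.length :=
      Nat.mul_le_mul_right w.length (by omega : m + 1 ≤ 6)
    have hexp : (m + 1) * w.length = m * w.length + w.length := by ring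
    omega
  have hset : {q : ℕ × ℕ | IsHPRunL (trip n w) q.1 q.2}
      = T 0 ∪ (T 1 ∪ (T 2 ∪ (T 3 ∪ (T 4 ∪ (T 5 ∪ {(0, 6 * w.length - 1)}))))) := by
    ext ⟨i, j⟩
    simp only [Set.mem_setOf_eq, Set.mem_union, Set.mem_singleton_iff, hT, hg,
      Set.mem_image, Prod.mk.injEq, Prod.exists]
    rw [hp_char hc hL i j]
    constructor
    · rintro (⟨m, hm, i', j', hj', hr, rfl, rfl⟩ | ⟨rfl, rfl⟩)
      · interval_cases m
        · exact Or.inl ⟨i', j', hr, rfl, rfl⟩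
        · exact Or.inr (Or.inl ⟨i', j', hr, rfl, rfl⟩)
        · exact Or.inr (Or.inr (Or.inl ⟨i', j', hr, rfl, rfl⟩))
        · exact Or.inr (Or.inr (Or.inr (Or.inl ⟨i', j', hr, rfl, rfl⟩)))
        · exact Or.inr (Or.inr (Or.inr (Or.inr (Or.inl ⟨i', j', hr, rfl, rfl⟩))))
        · exact Or.inr (Or.inr (Or.inr (Or.inr (Or.inr (Or.inl ⟨i', j', hr, rfl, rfl⟩)))))
      · exact Or.inr (Or.inr (Or.inr (Or.inr (Or.inr (Or.inr ⟨rfl, rfl⟩)))))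
    · have build : ∀ m, m < 6 → (∃ a b, (a, b) ∈ S ∧ m * w.length + a = i ∧
          m * w.length + b = j) →
          (∃ m' < 6, ∃ i' j', j' < w.length ∧ IsHPRunL w i' j' ∧
            i = m' * w.length + i' ∧ j = m' * w.length + j') ∨
          (i = 0 ∧ j = 6 * w.length - 1) := by
        rintro m hm ⟨a, b, hab, h1, h2⟩
        exact Or.inl ⟨m, hm, a, b, (hSsub _ hab).2, hab, h1.symm, h2.symm⟩
      rintro (h | h | h | h | h | h | h)
      · exact build 0 (by norm_num) h
      · exact build 1 (by norm_num) h
      · exact build 2 (by norm_num) h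
      · exact build 3 (by norm_num) h
      · exact build 4 (by norm_num) h
      · exact build 5 (by norm_num) h
      · exact Or.inr ⟨h.1, h.2⟩
  have hdisj : ∀ m, m < 6 → ∀ (X : Set (ℕ × ℕ)),
      (∀ q ∈ X, (∃ m', m < m' ∧ q ∈ T m') ∨ q = (0, 6 * w.length - 1)) →
      Disjoint (T m) X := by
    intro m hm X hX
    rw [Set.disjoint_left]
    intro q hq hqX
    rcases hX q hqX with ⟨m', hmm', hq'⟩ | rfl
    · exact hmono m m' hmm' q hq hq'
    · exact hpt m hm hq
  have pt : ({(0, 6 * w.length - 1)} : Set (ℕ × ℕ)).Finite := Set.finite_singleton _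
  have f5 : (T 5 ∪ {(0, 6 * w.length - 1)} : Set (ℕ × ℕ)).Finite := (hTfin 5).union pt
  have f4 := (hTfin 4).union f5
  have f3 := (hTfin 3).union f4
  have f2 := (hTfin 2).union f3
  have f1 := (hTfin 1).union f2
  have hd5 : Disjoint (T 5) ({(0, 6 * w.length - 1)} : Set (ℕ × ℕ)) :=
    hdisj 5 (by norm_num) _ (by rintro q hq; exact Or.inr hq)
  have hd4 : Disjoint (T 4) (T 5 ∪ {(0, 6 * w.length - 1)}) := by
    refine hdisj 4 (by norm_num) _ ?_
    rintro q (hq | hq)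
    · exact Or.inl ⟨5, by norm_num, hq⟩
    · exact Or.inr hq
  have hd3 : Disjoint (T 3) (T 4 ∪ (T 5 ∪ {(0, 6 * w.length - 1)})) := by
    refine hdisj 3 (by norm_num) _ ?_
    rintro q (hq | hq | hq)
    · exact Or.inl ⟨4, by norm_num, hq⟩
    · exact Or.inl ⟨5, by norm_num, hq⟩
    · exact Or.inr hq
  have hd2 : Disjoint (T 2) (T 3 ∪ (T 4 ∪ (T 5 ∪ {(0, 6 * w.length - 1)}))) := by
    refine hdisj 2 (by norm_num) _ ?_
    rintro q (hq | hq | hq | hq)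
    · exact Or.inl ⟨3, by norm_num, hq⟩
    · exact Or.inl ⟨4, by norm_num, hq⟩
    · exact Or.inl ⟨5, by norm_num, hq⟩
    · exact Or.inr hq
  have hd1 : Disjoint (T 1) (T 2 ∪ (T 3 ∪ (T 4 ∪ (T 5 ∪ {(0, 6 * w.length - 1)})))) := by
    refine hdisj 1 (by norm_num) _ ?_
    rintro q (hq | hq | hq | hq | hq)
    · exact Or.inl ⟨2, by norm_num, hq⟩
    · exact Or.inl ⟨3, by norm_num, hq⟩
    · exact Or.inl ⟨4, by norm_num, hq⟩
    · exact Or.inl ⟨5, by norm_num, hq⟩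
    · exact Or.inr hq
  have hd0 : Disjoint (T 0) (T 1 ∪ (T 2 ∪ (T 3 ∪ (T 4 ∪ (T 5 ∪ {(0, 6 * w.length - 1)}))))) := by
    refine hdisj 0 (by norm_num) _ ?_
    rintro q (hq | hq | hq | hq | hq | hq)
    · exact Or.inl ⟨1, by norm_num, hq⟩
    · exact Or.inl ⟨2, by norm_num, hq⟩
    · exact Or.inl ⟨3, by norm_num, hq⟩
    · exact Or.inl ⟨4, by norm_num, hq⟩
    · exact Or.inl ⟨5, by norm_num, hq⟩
    · exact Or.inr hq
  have hcount : hpRunCount (trip n w) = S.ncard + (S.ncard + (S.ncard + (S.ncard +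
      (S.ncard + (S.ncard + 1))))) := by
    rw [hpRunCount, hset,
      Set.ncard_union_eq hd0 (hTfin 0) f1, hTcard 0,
      Set.ncard_union_eq hd1 (hTfin 1) f2, hTcard 1,
      Set.ncard_union_eq hd2 (hTfin 2) f3, hTcard 2,
      Set.ncard_union_eq hd3 (hTfin 3) f4, hTcard 3,
      Set.ncard_union_eq hd4 (hTfin 4) f5, hTcard 4,
      Set.ncard_union_eq hd5 (hTfin 5) pt, hTcard 5,
      Set.ncard_singleton]
  have : hpRunCount w = S.ncard := rfl
  omega

end Count
section Final
variable {A : Type*}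

lemma seqWord_length (s : List A) : ∀ n, (seqWord s n).length = 6 ^ n * s.length := by
  intro n
  induction n with
  | zero => simp [seqWord]
  | succ n ih =>
    rw [seqWord_succ, trip_length, ih, pow_succ]
    ring

lemma seqWord_coords (s : List A) : ∀ n, ∀ a ∈ seqWord s n, a.2 < 2 ^ n := by
  intro n
  induction n with
  | zero =>
    intro a ha
    simp only [seqWord, List.mem_map] at ha
    obtain ⟨x, _, rfl⟩ := ha
    norm_num
  | succ n ih =>
    intro a ha
    rw [seqWord_succ] at ha
    unfold trip at ha
    have hbar : ∀ a ∈ barCopy n (seqWord s n), a.2 < 2 ^ (n + 1) := by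
      intro a ha
      simp only [barCopy, List.mem_map] at ha
      obtain ⟨b, hb, rfl⟩ := ha
      have := ih b hb
      have h2 : (2:ℕ) ^ (n + 1) = 2 * 2 ^ n := by rw [pow_succ]; ring
      simp only
      omega
    have hw : ∀ a ∈ seqWord s n, a.2 < 2 ^ (n + 1) := by
      intro a ha
      have := ih a ha
      have h2 : (2:ℕ) ^ (n + 1) = 2 * 2 ^ n := by rw [pow_succ]; ring
      omega
    simp only [List.mem_append] at ha
    rcases ha with ((h | h) | (h | h)) | (h | h)
    exacts [hw a h, hbar a h, hw a h, hbar a h, hw a h, hbar a h]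

lemma five_dvd (n : ℕ) : 5 ∣ 6 ^ n - 1 := by
  induction n with
  | zero => simp
  | succ n ih =>
    obtain ⟨c, hc⟩ := ih
    have h1 : 1 ≤ (6:ℕ) ^ n := Nat.one_le_pow _ _ (by norm_num)
    have h2 : (6:ℕ) ^ (n + 1) = 6 * 6 ^ n := by rw [pow_succ]; ring
    exact ⟨6 * c + 1, by omega⟩

lemma seqWord_count (s : List A) (hs : s ≠ []) :
    ∀ n, hpRunCount (seqWord s n) = 6 ^ n * hpRunCount s + (6 ^ n - 1) / 5 := by
  have hlen : 0 < s.length := List.length_pos_iff.mpr hs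
  intro n
  induction n with
  | zero =>
    show hpRunCount (s.map fun a => (a, 0)) = _
    rw [hpRunCount_map (fun a b h => congrArg Prod.fst h) s]
    norm_num
  | succ n ih =>
    have hL : 0 < (seqWord s n).length := by rw [seqWord_length]; positivity
    have step : hpRunCount (seqWord s (n + 1)) = 6 * hpRunCount (seqWord s n) + 1 := by
      rw [seqWord_succ]
      exact trip_count (seqWord_coords s n) hL
    obtain ⟨c, hc⟩ := five_dvd n
    have h1 : 1 ≤ (6:ℕ) ^ n := Nat.one_le_pow _ _ (by norm_num)
    have e1 : ((6:ℕ) ^ n - 1) / 5 = c := by omega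
    have h2 : (6:ℕ) ^ (n + 1) = 6 * 6 ^ n := by rw [pow_succ]; ring
    have e2 : ((6:ℕ) ^ (n + 1) - 1) / 5 = 6 * c + 1 := by omega
    rw [step, ih, e1, e2, h2]
    ring

end Final

open Filter in
/-- For a nonempty word `s` with `r` hp-runs and length `ℓ`, the words
`s_n` of the construction satisfy `|s_n| = 6^n ℓ` and
`hp-runs(s_n) = 6^n r + (6^n - 1)/5`, so the hp-run density of `s_n`
tends to `r/ℓ + 1/(5ℓ)`. -/
theorem density_improvement {A : Type*} (s : List A) (hs : s ≠ []) :
    (∀ n, (seqWord s n).length = 6 ^ n * s.length) ∧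
    (∀ n, hpRunCount (seqWord s n) = 6 ^ n * hpRunCount s + (6 ^ n - 1) / 5) ∧
    Tendsto (fun n => (hpRunCount (seqWord s n) : ℝ) / (seqWord s n).length)
      atTop
      (nhds ((hpRunCount s : ℝ) / s.length + 1 / (5 * s.length))) := by
  have hlen : 0 < s.length := List.length_pos_iff.mpr hs
  refine ⟨seqWord_length s, seqWord_count s hs, ?_⟩
  have hform : ∀ n, (hpRunCount (seqWord s n) : ℝ) / (seqWord s n).length
      = ((hpRunCount s : ℝ) / s.length + 1 / (5 * s.length))
        - (1 / 6 : ℝ) ^ n * (1 / (5 * s.length)) := by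
    intro n
    obtain ⟨c, hc⟩ := five_dvd n
    have h1 : 1 ≤ (6:ℕ) ^ n := Nat.one_le_pow _ _ (by norm_num)
    have e1 : ((6:ℕ) ^ n - 1) / 5 = c := by omega
    rw [seqWord_count s hs n, seqWord_length s n, e1]
    have hc' : ((6:ℝ) ^ n) = 5 * c + 1 := by
      have : (6:ℕ) ^ n = 5 * c + 1 := by omega
      exact_mod_cast this
    have hl0 : (s.length : ℝ) ≠ 0 := by positivity
    have h60 : ((6:ℝ) ^ n) ≠ 0 := by positivity
    have hpow : ((1:ℝ) / 6) ^ n = 1 / 6 ^ n := by rw [one_div_pow]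
    rw [hpow]
    push_cast
    field_simp
    linear_combination (-1:ℝ) * hc'
  have h0 : Tendsto (fun n : ℕ => ((hpRunCount s : ℝ) / s.length + 1 / (5 * s.length))
      - (1 / 6 : ℝ) ^ n * (1 / (5 * s.length))) atTop
      (nhds (((hpRunCount s : ℝ) / s.length + 1 / (5 * s.length)) - 0 * (1 / (5 * s.length)))) :=
    Tendsto.sub tendsto_const_nhds
      ((tendsto_pow_atTop_nhds_zero_of_lt_one (by norm_num) (by norm_num)).mul_const _)
  rw [zero_mul, sub_zero] at h0
  exact Tendsto.congr (fun n => (hform n).symm) h0
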